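/- Let F be the free abelian group on generators e_1, e_2, e_3, ... (indexed by positive integers), and let N be the subgroup generated by the elements e_2 - 2·e_1, 2·e_{2k+1} - e_{2k+2} - e_{2k} for k ≥ 1, and 2·e_{2k} - e_{2k+1} - e_{2k-1} for k ≥ 1. Then the quotient F/N is isomorphic to ℤ, with the class of e_1 as a generator. -/

import Mathlib

/-- The free abelian group on generators e_1, e_2, ... indexed by positive integers. -/
abbrev F : Type := ℕ+ →₀ ℤ

/-- The generator e_i. -/
noncomputable def e (i : ℕ+) : F := Finsupp.single i 1

/-- The subgroup N generated by e_2 - 2e_1, 2e_{2k+1} - e_{2k+2} - e_{2k} (k ≥ 1),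
and 2e_{2k} - e_{2k+1} - e_{2k-1} (k ≥ 1). -/
noncomputable def N : AddSubgroup F := AddSubgroup.closure
  ({e 2 - 2 • e 1} ∪
   {y | ∃ k : ℕ, ∃ _ : 1 ≤ k,
      y = 2 • e ⟨2 * k + 1, by omega⟩ - e ⟨2 * k + 2, by omega⟩ - e ⟨2 * k, by omega⟩} ∪
   {y | ∃ k : ℕ, ∃ _ : 1 ≤ k,
      y = 2 • e ⟨2 * k, by omega⟩ - e ⟨2 * k + 1, by omega⟩ - e ⟨2 * k - 1, by omega⟩})

lemma gen1 : e 2 - 2 • e 1 ∈ N :=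
  AddSubgroup.subset_closure (by left; left; rfl)

lemma gen2 (k : ℕ) (hk : 1 ≤ k) :
    2 • e ⟨2 * k + 1, by omega⟩ - e ⟨2 * k + 2, by omega⟩ - e ⟨2 * k, by omega⟩ ∈ N :=
  AddSubgroup.subset_closure (by left; right; exact ⟨k, hk, rfl⟩)

lemma gen3 (k : ℕ) (hk : 1 ≤ k) :
    2 • e ⟨2 * k, by omega⟩ - e ⟨2 * k + 1, by omega⟩ - e ⟨2 * k - 1, by omega⟩ ∈ N :=
  AddSubgroup.subset_closure (by right; exact ⟨k, hk, rfl⟩)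

lemma e_mk_eq {a b : ℕ} (h1 : 0 < a) (h2 : 0 < b) (h : a = b) :
    e ⟨a, h1⟩ = e ⟨b, h2⟩ := by subst h; rfl

lemma step (m : ℕ) (hm : 2 ≤ m) :
    2 • e ⟨m, by omega⟩ - e ⟨m + 1, by omega⟩ - e ⟨m - 1, by omega⟩ ∈ N := by
  rcases Nat.even_or_odd m with ⟨k, hk⟩ | ⟨k, hk⟩
  · have h := gen3 k (by omega)
    have e1 := e_mk_eq (a := 2 * k) (by omega) (by omega) (by omega : 2 * k = m)
    have e2 := e_mk_eq (a := 2 * k + 1) (by omega) (by omega) (by omega : 2 * k + 1 = m + 1)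
    have e3 := e_mk_eq (a := 2 * k - 1) (by omega) (by omega) (by omega : 2 * k - 1 = m - 1)
    rwa [e1, e2, e3] at h
  · have h := gen2 k (by omega)
    have e1 := e_mk_eq (a := 2 * k + 1) (by omega) (by omega) (by omega : 2 * k + 1 = m)
    have e2 := e_mk_eq (a := 2 * k + 2) (by omega) (by omega) (by omega : 2 * k + 2 = m + 1)
    have e3 := e_mk_eq (a := 2 * k) (by omega) (by omega) (by omega : 2 * k = m - 1)
    rwa [e1, e2, e3] at h

lemma key : ∀ n : ℕ, ∀ h : 0 < n, e ⟨n, h⟩ - (n : ℤ) • e 1 ∈ N := by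
  intro n
  induction n using Nat.strong_induction_on with
  | _ n ih =>
    intro h
    rcases (by omega : n = 1 ∨ n = 2 ∨ 3 ≤ n) with rfl | rfl | hn
    · have heq : e ⟨1, h⟩ - ((1 : ℕ) : ℤ) • e 1 = 0 := by
        have : (⟨1, h⟩ : ℕ+) = 1 := rfl
        rw [this]; simp; exact sub_self _
      rw [heq]; exact N.zero_mem
    · have heq : e ⟨2, h⟩ - ((2 : ℕ) : ℤ) • e 1 = e 2 - 2 • e 1 := by
        have h2 : (⟨2, h⟩ : ℕ+) = (2 : ℕ+) := rfl
        rw [h2, natCast_zsmul]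
      rw [heq]; exact gen1
    · obtain ⟨m, rfl⟩ : ∃ m, n = m + 2 := ⟨n - 2, by omega⟩
      have h1 := ih (m + 1) (by omega) (by omega)
      have h2 := ih m (by omega) (by omega)
      have h3 := step (m + 1) (by omega)
      rw [e_mk_eq (a := m + 1 - 1) (by omega) (b := m) (by omega) (by omega)] at h3
      have hmem := N.sub_mem (N.sub_mem (N.zsmul_mem h1 2) h2) h3
      have heq : e ⟨m + 2, h⟩ - ((m + 2 : ℕ) : ℤ) • e 1 =
          (2 : ℤ) • (e ⟨m + 1, by omega⟩ - ((m + 1 : ℕ) : ℤ) • e 1) -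
            (e ⟨m, by omega⟩ - ((m : ℕ) : ℤ) • e 1) -
            (2 • e ⟨m + 1, by omega⟩ - e ⟨m + 1 + 1, by omega⟩ - e ⟨m, by omega⟩) := by
        have he : e ⟨m + 1 + 1, (by omega : 0 < m + 1 + 1)⟩ = e ⟨m + 2, h⟩ :=
          e_mk_eq _ _ rfl
        rw [he]
        push_cast
        simp only [add_smul, one_smul, smul_sub, smul_add]
        abel
      rw [heq]; exact hmem

/-- The homomorphism F → ℤ, e_i ↦ i. -/
noncomputable def f : F →+ ℤ := Finsupp.liftAddHom fun i => zsmulAddGroupHom (i : ℤ)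

lemma f_e (i : ℕ+) : f (e i) = (i : ℤ) := by
  simp [f, e, zsmulAddGroupHom]

lemma f_e' (a : ℕ) (h : 0 < a) : f (e ⟨a, h⟩) = (a : ℤ) := f_e _

lemma N_le_ker : N ≤ f.ker := by
  rw [N, AddSubgroup.closure_le]
  rintro x ((rfl | ⟨k, hk, rfl⟩) | ⟨k, hk, rfl⟩)
  · simp only [SetLike.mem_coe, AddMonoidHom.mem_ker, map_sub, map_nsmul, f_e,
      nsmul_eq_mul]
    norm_num
  · simp only [SetLike.mem_coe, AddMonoidHom.mem_ker, map_sub, map_nsmul, f_e',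
      nsmul_eq_mul]
    omega
  · simp only [SetLike.mem_coe, AddMonoidHom.mem_ker, map_sub, map_nsmul, f_e',
      nsmul_eq_mul]
    omega

lemma main_mem (x : F) : x - f x • e 1 ∈ N := by
  induction x using Finsupp.induction_linear with
  | zero => simp
  | add x y hx hy =>
    have := N.add_mem hx hy
    have heq : (x + y) - f (x + y) • e 1 = (x - f x • e 1) + (y - f y • e 1) := by
      rw [map_add, add_smul]; abel
    rw [heq]; exact this
  | single i a =>
    have h1 : (Finsupp.single i a : F) = a • e i := by
      simp [e, Finsupp.smul_single]
    rw [h1]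
    have h2 : f (a • e i) = a * (i : ℤ) := by
      rw [map_zsmul, f_e, smul_eq_mul]
    rw [h2]
    have h3 : a • e i - (a * (i : ℤ)) • e 1 = a • (e i - ((i : ℕ) : ℤ) • e 1) := by
      rw [smul_sub, mul_smul]
    rw [h3]
    exact N.zsmul_mem (key (i : ℕ) i.pos) a

/-- F/N is isomorphic to ℤ, with the class of e_1 as a generator. -/
theorem stmt10 : ∃ φ : (F ⧸ N) ≃+ ℤ, φ (QuotientAddGroup.mk (e 1)) = 1 := by
  have hker : ∀ x ∈ N, f x = 0 := fun x hx => N_le_ker hx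
  let φ0 : (F ⧸ N) →+ ℤ := QuotientAddGroup.lift N f hker
  let g : ℤ →+ (F ⧸ N) := zmultiplesHom _ (QuotientAddGroup.mk (e 1))
  have hφ0e1 : φ0 (QuotientAddGroup.mk (e 1)) = 1 := by
    show f (e 1) = 1
    simp [f_e]
  refine ⟨{ toFun := φ0, invFun := g, left_inv := ?_, right_inv := ?_,
            map_add' := φ0.map_add }, hφ0e1⟩
  · intro x
    induction x using QuotientAddGroup.induction_on with
    | H x =>
      show f x • (QuotientAddGroup.mk (e 1) : F ⧸ N) = _
      rw [← QuotientAddGroup.mk_zsmul]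
      rw [QuotientAddGroup.eq_iff_sub_mem]
      have := main_mem x
      have heq : f x • e 1 - x = -(x - f x • e 1) := by abel
      rw [heq]
      exact N.neg_mem this
  · intro z
    show φ0 (z • QuotientAddGroup.mk (e 1)) = z
    rw [map_zsmul, hφ0e1, smul_eq_mul, mul_one]
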